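/- For each M ≥ 1 let ĥ_A^(M) and ĥ_B^(M) be independent complex Gaussian random vectors in ℂ^M such that ĥ_X^(M) has mean m_X^(M) with ‖m_X^(M)‖² = M·β_X·K_X/(K_X+1) and i.i.d. entries of variance v_X = β_X·η_X/(K_X+1) (not depending on M). If |⟨m_B^(M), m_A^(M)⟩|/M → 0 as M → ∞, then for any p_A ≥ 0, (1/M²)·E{ p_A( |ĥ_A^(M)H ĥ_A^(M)|² + |ĥ_B^(M)H ĥ_A^(M)|² ) } → p_A·ω_A² as M → ∞, where ω_A = β_A(K_A+η_A)/(K_A+1). This is the asymptotically exact form of the approximation (40) for the desired-signal term E{A_i} ≈ M²·p_{A,i}·ω_{AR,i}². -/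

import Mathlib

open MeasureTheory ProbabilityTheory

/-- `u^H w = ∑ₖ conj(uₖ) wₖ`. -/
noncomputable def dotH {M : ℕ} (u w : Fin M → ℂ) : ℂ :=
  ∑ k, (starRingEnd ℂ) (u k) * w k

/-- `‖u‖² = u^H u = ∑ₖ |uₖ|²`. -/
noncomputable def norm2 {M : ℕ} (u : Fin M → ℂ) : ℝ :=
  ∑ k, Complex.normSq (u k)

/-- A complex Gaussian random vector in `ℂ^M` with mean `m` and i.i.d. circularly
symmetric entries of variance `v`: `x = m + z` where the `2M` real random variables
`Re z₁, …, Re z_M, Im z₁, …, Im z_M` are mutually independent real Gaussian random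
variables each with mean `0` and variance `v/2`. -/
def IsComplexGaussianVec {Ω : Type*} [MeasurableSpace Ω] (μ : Measure Ω) (M : ℕ)
    (x : Ω → Fin M → ℂ) (m : Fin M → ℂ) (v : ℝ) : Prop :=
  (∀ k, Measurable fun ω => x ω k) ∧
  iIndepFun (m := fun _ : Fin M ⊕ Fin M => inferInstance)
    (Sum.elim (fun k ω => (x ω k - m k).re) (fun k ω => (x ω k - m k).im)) μ ∧
  (∀ k : Fin M, μ.map (fun ω => (x ω k - m k).re) = gaussianReal 0 (Real.toNNReal (v / 2))) ∧
  (∀ k : Fin M, μ.map (fun ω => (x ω k - m k).im) = gaussianReal 0 (Real.toNNReal (v / 2)))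


namespace GaussAux
open Real Filter Topology
open scoped NNReal ENNReal



lemma integrable_pow_mul_gauss {b : ℝ} (hb : 0 < b) (n : ℕ) :
    Integrable fun x : ℝ => x ^ n * Real.exp (-b * x ^ 2) := by
  have h : (-1 : ℝ) < (n : ℝ) := lt_of_lt_of_le (by norm_num) (Nat.cast_nonneg n)
  simpa [Real.rpow_natCast] using integrable_rpow_mul_exp_neg_mul_sq hb h

lemma gauss_parts {b : ℝ} (hb : 0 < b) (n : ℕ) :
    ∫ x : ℝ, x ^ (n + 2) * Real.exp (-b * x ^ 2)
      = ((n + 1 : ℝ) / (2 * b)) * ∫ x : ℝ, x ^ n * Real.exp (-b * x ^ 2) := by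
  set f' : ℝ → ℝ := fun x => (n + 1 : ℝ) * (x ^ n * Real.exp (-b * x ^ 2))
      - (2 * b) * (x ^ (n + 2) * Real.exp (-b * x ^ 2)) with hf'
  have hderiv : ∀ x : ℝ, HasDerivAt (fun x : ℝ => x ^ (n + 1) * Real.exp (-b * x ^ 2)) (f' x) x := by
    intro x
    have h1 : HasDerivAt (fun x : ℝ => x ^ (n + 1)) ((n + 1 : ℝ) * x ^ n) x := by
      simpa using hasDerivAt_pow (n + 1) x
    have h2 : HasDerivAt (fun x : ℝ => -b * x ^ 2) (-b * (2 * x)) x := by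
      simpa using (hasDerivAt_pow 2 x).const_mul (-b)
    have h3 := h1.mul h2.exp
    refine h3.congr_deriv ?_
    simp only [hf']
    ring
  have hint : Integrable f' := by
    exact ((integrable_pow_mul_gauss hb n).const_mul _).sub
      ((integrable_pow_mul_gauss hb (n + 2)).const_mul _)
  have h0 : ∫ x, f' x = 0 :=
    integral_eq_zero_of_hasDerivAt_of_integrable hderiv hint (integrable_pow_mul_gauss hb (n + 1))
  rw [hf'] at h0
  rw [integral_sub ((integrable_pow_mul_gauss hb n).const_mul _)
    ((integrable_pow_mul_gauss hb (n + 2)).const_mul _), integral_const_mul, integral_const_mul]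
    at h0
  have hb' : (2 * b) ≠ 0 := by positivity
  rw [div_mul_eq_mul_div, eq_div_iff hb']
  linarith [h0]

lemma gauss_J0 {b : ℝ} (hb : 0 < b) :
    ∫ x : ℝ, x ^ 0 * Real.exp (-b * x ^ 2) = Real.sqrt (π / b) := by
  simpa using integral_gaussian b

lemma gauss_J1 {b : ℝ} (hb : 0 < b) : ∫ x : ℝ, x ^ 1 * Real.exp (-b * x ^ 2) = 0 := by
  have hderiv : ∀ x : ℝ, HasDerivAt (fun x : ℝ => -(1 / (2 * b)) * Real.exp (-b * x ^ 2))
      (x ^ 1 * Real.exp (-b * x ^ 2)) x := by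
    intro x
    have h2 : HasDerivAt (fun x : ℝ => -b * x ^ 2) (-b * (2 * x)) x := by
      simpa using (hasDerivAt_pow 2 x).const_mul (-b)
    have h3 := h2.exp.const_mul (-(1 / (2 * b)))
    refine h3.congr_deriv ?_
    field_simp
  have h0 := integral_eq_zero_of_hasDerivAt_of_integrable hderiv
    (integrable_pow_mul_gauss hb 1) ((integrable_exp_neg_mul_sq hb).const_mul _)
  exact h0

lemma gauss_J3 {b : ℝ} (hb : 0 < b) : ∫ x : ℝ, x ^ 3 * Real.exp (-b * x ^ 2) = 0 := by
  have := gauss_parts hb 1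
  rw [gauss_J1 hb] at this
  simpa using this

lemma gauss_J2 {b : ℝ} (hb : 0 < b) :
    ∫ x : ℝ, x ^ 2 * Real.exp (-b * x ^ 2) = (1 / (2 * b)) * Real.sqrt (π / b) := by
  have := gauss_parts hb 0
  rw [gauss_J0 hb] at this
  simpa using this

lemma gauss_J4 {b : ℝ} (hb : 0 < b) :
    ∫ x : ℝ, x ^ 4 * Real.exp (-b * x ^ 2) = (3 / (4 * b ^ 2)) * Real.sqrt (π / b) := by
  have := gauss_parts hb 2
  rw [gauss_J2 hb] at this
  rw [this]
  field_simp
  ring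



variable {t : ℝ≥0} {n : ℕ}

lemma pdf_eq (t : ℝ≥0) (x : ℝ) :
    gaussianPDFReal 0 t x = (Real.sqrt (2 * π * t))⁻¹ * Real.exp (-(2 * (t : ℝ))⁻¹ * x ^ 2) := by
  rw [gaussianPDFReal]
  congr 1
  rw [sub_zero]
  ring

lemma gaussianReal_eq_withDensity (ht : t ≠ 0) :
    gaussianReal 0 t
      = (volume : Measure ℝ).withDensity fun x => ((gaussianPDFReal 0 t x).toNNReal : ℝ≥0∞) := by
  rw [gaussianReal_of_var_ne_zero _ ht]
  rfl

lemma integrable_pow_gaussianReal (t : ℝ≥0) (n : ℕ) :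
    Integrable (fun x : ℝ => x ^ n) (gaussianReal 0 t) := by
  by_cases ht : t = 0
  · subst ht
    rw [gaussianReal_zero_var]
    refine ⟨(measurable_id.pow_const n).aestronglyMeasurable, ?_⟩
    rw [HasFiniteIntegral, lintegral_dirac]
    exact ENNReal.coe_lt_top
  · have ht' : 0 < (t : ℝ) := by positivity
    have hb : 0 < (2 * (t : ℝ))⁻¹ := by positivity
    rw [gaussianReal_eq_withDensity ht,
      integrable_withDensity_iff_integrable_smul (measurable_gaussianPDFReal 0 t).real_toNNReal]
    have : ∀ x : ℝ, (gaussianPDFReal 0 t x).toNNReal • (x ^ n)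
        = (Real.sqrt (2 * π * t))⁻¹ * (x ^ n * Real.exp (-(2 * (t : ℝ))⁻¹ * x ^ 2)) := by
      intro x
      rw [NNReal.smul_def, smul_eq_mul, Real.coe_toNNReal _ (gaussianPDFReal_nonneg 0 t x),
        pdf_eq]
      ring
    simp only [this]
    exact (integrable_pow_mul_gauss hb n).const_mul _
  
lemma integral_pow_gaussianReal (ht : t ≠ 0) (n : ℕ) :
    ∫ x, x ^ n ∂(gaussianReal 0 t)
      = (Real.sqrt (2 * π * t))⁻¹ * ∫ x : ℝ, x ^ n * Real.exp (-(2 * (t : ℝ))⁻¹ * x ^ 2) := by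
  rw [gaussianReal_eq_withDensity ht,
    integral_withDensity_eq_integral_smul (measurable_gaussianPDFReal 0 t).real_toNNReal]
  rw [← integral_const_mul]
  congr 1
  ext x
  rw [NNReal.smul_def, smul_eq_mul, Real.coe_toNNReal _ (gaussianPDFReal_nonneg 0 t x), pdf_eq]
  ring

lemma sqrt_pi_div (ht : t ≠ 0) :
    Real.sqrt (π / (2 * (t : ℝ))⁻¹) = Real.sqrt (2 * π * t) := by
  have ht' : 0 < (t : ℝ) := by positivity
  congr 1
  field_simp

lemma moment_one_gaussianReal (t : ℝ≥0) : ∫ x, x ^ 1 ∂(gaussianReal 0 t) = 0 := by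
  by_cases ht : t = 0
  · subst ht; rw [gaussianReal_zero_var, integral_dirac]; simp
  · have hb : 0 < (2 * (t : ℝ))⁻¹ := by positivity
    rw [integral_pow_gaussianReal ht, gauss_J1 hb, mul_zero]

lemma moment_three_gaussianReal (t : ℝ≥0) : ∫ x, x ^ 3 ∂(gaussianReal 0 t) = 0 := by
  by_cases ht : t = 0
  · subst ht; rw [gaussianReal_zero_var, integral_dirac]; simp
  · have hb : 0 < (2 * (t : ℝ))⁻¹ := by positivity
    rw [integral_pow_gaussianReal ht, gauss_J3 hb, mul_zero]

lemma moment_two_gaussianReal (t : ℝ≥0) : ∫ x, x ^ 2 ∂(gaussianReal 0 t) = (t : ℝ) := by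
  by_cases ht : t = 0
  · subst ht; rw [gaussianReal_zero_var, integral_dirac]; simp
  · have ht' : 0 < (t : ℝ) := by positivity
    have hb : 0 < (2 * (t : ℝ))⁻¹ := by positivity
    have hs : 0 < Real.sqrt (2 * π * t) := Real.sqrt_pos.2 (by positivity)
    rw [integral_pow_gaussianReal ht, gauss_J2 hb, sqrt_pi_div ht]
    field_simp

lemma moment_four_gaussianReal (t : ℝ≥0) : ∫ x, x ^ 4 ∂(gaussianReal 0 t) = 3 * (t : ℝ) ^ 2 := by
  by_cases ht : t = 0
  · subst ht; rw [gaussianReal_zero_var, integral_dirac]; simp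
  · have ht' : 0 < (t : ℝ) := by positivity
    have hb : 0 < (2 * (t : ℝ))⁻¹ := by positivity
    have hs : 0 < Real.sqrt (2 * π * t) := Real.sqrt_pos.2 (by positivity)
    rw [integral_pow_gaussianReal ht, gauss_J4 hb, sqrt_pi_div ht]
    field_simp
    ring



variable {Ω : Type*} [MeasurableSpace Ω] {μ : Measure Ω} [IsProbabilityMeasure μ]

section coord

variable {X Y : Ω → ℝ} {t : ℝ≥0} {p q : ℝ}

lemma rv_integrable_pow (hX : Measurable X) (hmap : μ.map X = gaussianReal 0 t) (n : ℕ) :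
    Integrable (fun ω => X ω ^ n) μ := by
  have h := integrable_pow_gaussianReal t n
  rw [← hmap] at h
  exact
    (integrable_map_measure (g := fun x => x ^ n)
      (measurable_id'.pow_const n).aestronglyMeasurable hX.aemeasurable).1 h

lemma rv_moment (hX : Measurable X) (hmap : μ.map X = gaussianReal 0 t) (n : ℕ) :
    ∫ ω, X ω ^ n ∂μ = ∫ x, x ^ n ∂(gaussianReal 0 t) := by
  rw [← hmap, integral_map hX.aemeasurable (f := fun x => x ^ n)
    (measurable_id'.pow_const n).aestronglyMeasurable]

lemma rv_int1 (hX : Measurable X) (hmap : μ.map X = gaussianReal 0 t) :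
    Integrable X μ := by simpa using rv_integrable_pow hX hmap 1

lemma rv_E1 (hX : Measurable X) (hmap : μ.map X = gaussianReal 0 t) :
    ∫ ω, X ω ∂μ = 0 := by
  have := rv_moment hX hmap 1
  rw [moment_one_gaussianReal] at this
  simpa using this

lemma shift_sq_integrable (hX : Measurable X) (hmap : μ.map X = gaussianReal 0 t) :
    Integrable (fun ω => (p + X ω) ^ 2) μ := by
  have e : (fun ω => (p + X ω) ^ 2) = fun ω => p ^ 2 + (2 * p * X ω + X ω ^ 2) :=
    funext fun ω => by ring
  rw [e]
  have ig : Integrable (fun ω => 2 * p * X ω + X ω ^ 2) μ :=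
    ((rv_int1 hX hmap).const_mul _).add (rv_integrable_pow hX hmap 2)
  exact (integrable_const (p ^ 2)).add ig

lemma shift_sq_integral (hX : Measurable X) (hmap : μ.map X = gaussianReal 0 t) :
    ∫ ω, (p + X ω) ^ 2 ∂μ = p ^ 2 + t := by
  have e : (fun ω => (p + X ω) ^ 2) = fun ω => p ^ 2 + (2 * p * X ω + X ω ^ 2) :=
    funext fun ω => by ring
  have i1 : Integrable (fun ω => 2 * p * X ω) μ := (rv_int1 hX hmap).const_mul _
  have i2 : Integrable (fun ω => X ω ^ 2) μ := rv_integrable_pow hX hmap 2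
  have ig : Integrable (fun ω => 2 * p * X ω + X ω ^ 2) μ := i1.add i2
  rw [e, integral_add (integrable_const _) ig, integral_add i1 i2,
    integral_const_mul, rv_E1 hX hmap, rv_moment hX hmap 2, moment_two_gaussianReal]
  simp

lemma shift_quart_integrable (hX : Measurable X) (hmap : μ.map X = gaussianReal 0 t) :
    Integrable (fun ω => (p + X ω) ^ 4) μ := by
  have e : (fun ω => (p + X ω) ^ 4) = fun ω => p ^ 4 +
      (4 * p ^ 3 * X ω + (6 * p ^ 2 * X ω ^ 2 + (4 * p * X ω ^ 3 + X ω ^ 4))) :=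
    funext fun ω => by ring
  have i1 : Integrable (fun ω => 4 * p ^ 3 * X ω) μ := (rv_int1 hX hmap).const_mul _
  have i2 : Integrable (fun ω => 6 * p ^ 2 * X ω ^ 2) μ := (rv_integrable_pow hX hmap 2).const_mul _
  have i3 : Integrable (fun ω => 4 * p * X ω ^ 3) μ := (rv_integrable_pow hX hmap 3).const_mul _
  have i4 : Integrable (fun ω => X ω ^ 4) μ := rv_integrable_pow hX hmap 4
  have g3 : Integrable (fun ω => 4 * p * X ω ^ 3 + X ω ^ 4) μ := i3.add i4
  have g2 : Integrable (fun ω => 6 * p ^ 2 * X ω ^ 2 + (4 * p * X ω ^ 3 + X ω ^ 4)) μ := i2.add g3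
  have g1 : Integrable (fun ω => 4 * p ^ 3 * X ω + (6 * p ^ 2 * X ω ^ 2 + (4 * p * X ω ^ 3 + X ω ^ 4))) μ := i1.add g2
  rw [e]
  exact (integrable_const _).add g1

lemma shift_quart_integral (hX : Measurable X) (hmap : μ.map X = gaussianReal 0 t) :
    ∫ ω, (p + X ω) ^ 4 ∂μ = p ^ 4 + 6 * p ^ 2 * t + 3 * (t : ℝ) ^ 2 := by
  have e : (fun ω => (p + X ω) ^ 4) = fun ω => p ^ 4 +
      (4 * p ^ 3 * X ω + (6 * p ^ 2 * X ω ^ 2 + (4 * p * X ω ^ 3 + X ω ^ 4))) :=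
    funext fun ω => by ring
  have i1 : Integrable (fun ω => 4 * p ^ 3 * X ω) μ := (rv_int1 hX hmap).const_mul _
  have i2 : Integrable (fun ω => 6 * p ^ 2 * X ω ^ 2) μ := (rv_integrable_pow hX hmap 2).const_mul _
  have i3 : Integrable (fun ω => 4 * p * X ω ^ 3) μ := (rv_integrable_pow hX hmap 3).const_mul _
  have i4 : Integrable (fun ω => X ω ^ 4) μ := rv_integrable_pow hX hmap 4
  have g3 : Integrable (fun ω => 4 * p * X ω ^ 3 + X ω ^ 4) μ := i3.add i4
  have g2 : Integrable (fun ω => 6 * p ^ 2 * X ω ^ 2 + (4 * p * X ω ^ 3 + X ω ^ 4)) μ := i2.add g3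
  have g1 : Integrable (fun ω => 4 * p ^ 3 * X ω + (6 * p ^ 2 * X ω ^ 2 + (4 * p * X ω ^ 3 + X ω ^ 4))) μ := i1.add g2
  rw [e, integral_add (integrable_const _) g1,
    integral_add i1 g2,
    integral_add i2 g3,
    integral_add i3 i4,
    integral_const_mul, integral_const_mul, integral_const_mul,
    rv_E1 hX hmap, rv_moment hX hmap 2, moment_two_gaussianReal,
    rv_moment hX hmap 3, rv_moment hX hmap 4, moment_three_gaussianReal,
    moment_four_gaussianReal]
  simp
  ring

-- two independent coordinates
lemma indep_shift_sq (hXY : IndepFun X Y μ) :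
    IndepFun (fun ω => (p + X ω) ^ 2) (fun ω => (q + Y ω) ^ 2) μ :=
  hXY.comp ((measurable_const.add measurable_id).pow_const 2)
    ((measurable_const.add measurable_id).pow_const 2)

lemma prod_sq_integrable (hXY : IndepFun X Y μ)
    (hX : Measurable X) (hmapX : μ.map X = gaussianReal 0 t)
    (hY : Measurable Y) (hmapY : μ.map Y = gaussianReal 0 t) :
    Integrable (fun ω => (p + X ω) ^ 2 * (q + Y ω) ^ 2) μ := by
  have := (indep_shift_sq (p := p) (q := q) hXY).integrable_mul
    (shift_sq_integrable hX hmapX) (shift_sq_integrable hY hmapY)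
  simpa [Pi.mul_def] using this

lemma prod_sq_integral (hXY : IndepFun X Y μ)
    (hX : Measurable X) (hmapX : μ.map X = gaussianReal 0 t)
    (hY : Measurable Y) (hmapY : μ.map Y = gaussianReal 0 t) :
    ∫ ω, (p + X ω) ^ 2 * (q + Y ω) ^ 2 ∂μ = (p ^ 2 + t) * (q ^ 2 + t) := by
  rw [(indep_shift_sq (p := p) (q := q) hXY).integral_fun_mul_eq_mul_integral
      ((hX.const_add p).pow_const 2).aestronglyMeasurable
      ((hY.const_add q).pow_const 2).aestronglyMeasurable,
    shift_sq_integral hX hmapX, shift_sq_integral hY hmapY]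

lemma S_integrable (hX : Measurable X) (hmapX : μ.map X = gaussianReal 0 t)
    (hY : Measurable Y) (hmapY : μ.map Y = gaussianReal 0 t) :
    Integrable (fun ω => (p + X ω) ^ 2 + (q + Y ω) ^ 2) μ :=
  (shift_sq_integrable hX hmapX).add (shift_sq_integrable hY hmapY)

lemma ES (hX : Measurable X) (hmapX : μ.map X = gaussianReal 0 t)
    (hY : Measurable Y) (hmapY : μ.map Y = gaussianReal 0 t) :
    ∫ ω, ((p + X ω) ^ 2 + (q + Y ω) ^ 2) ∂μ = (p ^ 2 + q ^ 2) + 2 * t := by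
  rw [integral_add (shift_sq_integrable hX hmapX) (shift_sq_integrable hY hmapY),
    shift_sq_integral hX hmapX, shift_sq_integral hY hmapY]
  ring

lemma S_sq_integrable (hXY : IndepFun X Y μ)
    (hX : Measurable X) (hmapX : μ.map X = gaussianReal 0 t)
    (hY : Measurable Y) (hmapY : μ.map Y = gaussianReal 0 t) :
    Integrable (fun ω => ((p + X ω) ^ 2 + (q + Y ω) ^ 2) ^ 2) μ := by
  have e : (fun ω => ((p + X ω) ^ 2 + (q + Y ω) ^ 2) ^ 2)
      = fun ω => (p + X ω) ^ 4 + (2 * ((p + X ω) ^ 2 * (q + Y ω) ^ 2) + (q + Y ω) ^ 4) :=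
    funext fun ω => by ring
  have i1 : Integrable (fun ω => 2 * ((p + X ω) ^ 2 * (q + Y ω) ^ 2)) μ :=
    (prod_sq_integrable hXY hX hmapX hY hmapY).const_mul _
  have g1 : Integrable (fun ω => 2 * ((p + X ω) ^ 2 * (q + Y ω) ^ 2) + (q + Y ω) ^ 4) μ :=
    i1.add (shift_quart_integrable hY hmapY)
  rw [e]
  exact (shift_quart_integrable hX hmapX).add g1

lemma ES2 (hXY : IndepFun X Y μ)
    (hX : Measurable X) (hmapX : μ.map X = gaussianReal 0 t)
    (hY : Measurable Y) (hmapY : μ.map Y = gaussianReal 0 t) :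
    ∫ ω, ((p + X ω) ^ 2 + (q + Y ω) ^ 2) ^ 2 ∂μ
      = (p ^ 2 + q ^ 2) ^ 2 + 8 * (p ^ 2 + q ^ 2) * t + 8 * (t : ℝ) ^ 2 := by
  have e : (fun ω => ((p + X ω) ^ 2 + (q + Y ω) ^ 2) ^ 2)
      = fun ω => (p + X ω) ^ 4 + (2 * ((p + X ω) ^ 2 * (q + Y ω) ^ 2) + (q + Y ω) ^ 4) :=
    funext fun ω => by ring
  have i1 : Integrable (fun ω => 2 * ((p + X ω) ^ 2 * (q + Y ω) ^ 2)) μ :=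
    (prod_sq_integrable hXY hX hmapX hY hmapY).const_mul _
  have g1 : Integrable (fun ω => 2 * ((p + X ω) ^ 2 * (q + Y ω) ^ 2) + (q + Y ω) ^ 4) μ :=
    i1.add (shift_quart_integrable hY hmapY)
  rw [e, integral_add (shift_quart_integrable hX hmapX) g1,
    integral_add i1 (shift_quart_integrable hY hmapY), integral_const_mul,
    shift_quart_integral hX hmapX, shift_quart_integral hY hmapY,
    prod_sq_integral hXY hX hmapX hY hmapY]
  ring

lemma shift_int1 (hX : Measurable X) (hmap : μ.map X = gaussianReal 0 t) :
    Integrable (fun ω => p + X ω) μ := (integrable_const p).add (rv_int1 hX hmap)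

lemma shift_E1 (hX : Measurable X) (hmap : μ.map X = gaussianReal 0 t) :
    ∫ ω, (p + X ω) ∂μ = p := by
  rw [integral_add (integrable_const p) (rv_int1 hX hmap), rv_E1 hX hmap]
  simp

lemma cx_integrable (hX : Measurable X) (hmapX : μ.map X = gaussianReal 0 t)
    (hY : Measurable Y) (hmapY : μ.map Y = gaussianReal 0 t) :
    Integrable (fun ω => ((p + X ω : ℝ) + (q + Y ω : ℝ) * Complex.I : ℂ)) μ :=
  (shift_int1 hX hmapX).ofReal.add ((shift_int1 hY hmapY).ofReal.mul_const _)

lemma cx_integral (hX : Measurable X) (hmapX : μ.map X = gaussianReal 0 t)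
    (hY : Measurable Y) (hmapY : μ.map Y = gaussianReal 0 t) :
    ∫ ω, ((p + X ω : ℝ) + (q + Y ω : ℝ) * Complex.I : ℂ) ∂μ
      = (p : ℂ) + (q : ℂ) * Complex.I := by
  have iA : Integrable (fun ω => ((p + X ω : ℝ) : ℂ)) μ := (shift_int1 hX hmapX).ofReal
  have iB : Integrable (fun ω => ((q + Y ω : ℝ) : ℂ) * Complex.I) μ :=
    (shift_int1 hY hmapY).ofReal.mul_const _
  rw [integral_add iA iB, integral_mul_const]
  have e1 : ∫ ω, ((p + X ω : ℝ) : ℂ) ∂μ = ((p : ℝ) : ℂ) :=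
    calc ∫ ω, ((p + X ω : ℝ) : ℂ) ∂μ = ((∫ ω, (p + X ω) ∂μ : ℝ) : ℂ) := integral_ofReal
      _ = ((p : ℝ) : ℂ) := by rw [shift_E1 hX hmapX]
  have e2 : ∫ ω, ((q + Y ω : ℝ) : ℂ) ∂μ = ((q : ℝ) : ℂ) :=
    calc ∫ ω, ((q + Y ω : ℝ) : ℂ) ∂μ = ((∫ ω, (q + Y ω) ∂μ : ℝ) : ℂ) := integral_ofReal
      _ = ((q : ℝ) : ℂ) := by rw [shift_E1 hY hmapY]
  rw [e1, e2]

end coord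

lemma indep_integral_mul_complex {X Y : Ω → ℂ} (h : IndepFun X Y μ)
    (hX : AEMeasurable X μ) (hY : AEMeasurable Y μ) :
    ∫ ω, X ω * Y ω ∂μ = (∫ ω, X ω ∂μ) * ∫ ω, Y ω ∂μ := by
  have hmap := (indepFun_iff_map_prod_eq_prod_map_map hX hY).1 h
  have h1 : IsProbabilityMeasure (μ.map X) := Measure.isProbabilityMeasure_map hX
  have h2 : IsProbabilityMeasure (μ.map Y) := Measure.isProbabilityMeasure_map hY
  calc ∫ ω, X ω * Y ω ∂μ
      = ∫ z : ℂ × ℂ, z.1 * z.2 ∂(μ.map fun ω => (X ω, Y ω)) := by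
        rw [integral_map (f := fun z : ℂ × ℂ => z.1 * z.2) (hX.prodMk hY) (measurable_fst.mul measurable_snd).aestronglyMeasurable]
    _ = ∫ z : ℂ × ℂ, z.1 * z.2 ∂((μ.map X).prod (μ.map Y)) := by rw [hmap]
    _ = (∫ x, x ∂(μ.map X)) * ∫ y, y ∂(μ.map Y) := integral_prod_mul (fun x => x) (fun y => y)
    _ = (∫ ω, X ω ∂μ) * ∫ ω, Y ω ∂μ := by
        rw [integral_map (f := fun x : ℂ => x) hX aestronglyMeasurable_id,
          integral_map (f := fun x : ℂ => x) hY aestronglyMeasurable_id]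




section vec

variable {M : ℕ} {x : Ω → Fin M → ℂ} {m : Fin M → ℂ} {v : ℝ}

/-- coordinate normSq decomposition -/
lemma coord_normSq (k : Fin M) (ω : Ω) :
    Complex.normSq (x ω k)
      = ((m k).re + (x ω k - m k).re) ^ 2 + ((m k).im + (x ω k - m k).im) ^ 2 := by
  rw [Complex.normSq_apply, Complex.sub_re, Complex.sub_im]
  ring

lemma coord_eq (k : Fin M) (ω : Ω) :
    x ω k = (((m k).re + (x ω k - m k).re : ℝ) + ((m k).im + (x ω k - m k).im : ℝ) * Complex.I : ℂ) := by
  rw [Complex.sub_re, Complex.sub_im]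
  have : ((m k).re + ((x ω k).re - (m k).re)) = (x ω k).re := by ring
  rw [this]
  have : ((m k).im + ((x ω k).im - (m k).im)) = (x ω k).im := by ring
  rw [this, Complex.re_add_im]

lemma vec_measA (hvec : IsComplexGaussianVec μ M x m v) (k : Fin M) :
    Measurable fun ω => (x ω k - m k).re :=
  Complex.measurable_re.comp ((hvec.1 k).sub measurable_const)

lemma vec_measB (hvec : IsComplexGaussianVec μ M x m v) (k : Fin M) :
    Measurable fun ω => (x ω k - m k).im :=
  Complex.measurable_im.comp ((hvec.1 k).sub measurable_const)

lemma vec_fam_meas (hvec : IsComplexGaussianVec μ M x m v) :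
    ∀ i : Fin M ⊕ Fin M, Measurable (Sum.elim
      (fun k ω => (x ω k - m k).re) (fun k ω => (x ω k - m k).im) i) := by
  rintro (k | k)
  · exact vec_measA hvec k
  · exact vec_measB hvec k

lemma vec_indep_ab (hvec : IsComplexGaussianVec μ M x m v) (k : Fin M) :
    IndepFun (fun ω => (x ω k - m k).re) (fun ω => (x ω k - m k).im) μ := by
  have h := hvec.2.1.indepFun (show (Sum.inl k : Fin M ⊕ Fin M) ≠ Sum.inr k by simp)
  exact h

lemma vec_indep_pair (hvec : IsComplexGaussianVec μ M x m v) {k l : Fin M} (hkl : k ≠ l) :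
    IndepFun (fun ω => ((x ω k - m k).re, (x ω k - m k).im))
      (fun ω => ((x ω l - m l).re, (x ω l - m l).im)) μ := by
  have h := hvec.2.1.indepFun_prodMk_prodMk (vec_fam_meas hvec)
    (Sum.inl k) (Sum.inr k) (Sum.inl l) (Sum.inr l)
    (by simp [hkl]) (by simp) (by simp) (by simp [hkl])
  exact h

/-- independence of coordinate normSq for distinct coordinates -/
lemma vec_indep_S (hvec : IsComplexGaussianVec μ M x m v) {k l : Fin M} (hkl : k ≠ l) :
    IndepFun (fun ω => ((m k).re + (x ω k - m k).re) ^ 2 + ((m k).im + (x ω k - m k).im) ^ 2)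
      (fun ω => ((m l).re + (x ω l - m l).re) ^ 2 + ((m l).im + (x ω l - m l).im) ^ 2) μ := by
  have hφ : ∀ c : ℂ, Measurable (fun r : ℝ × ℝ => (c.re + r.1) ^ 2 + (c.im + r.2) ^ 2) := by
    intro c
    exact ((measurable_const.add measurable_fst).pow_const 2).add
      ((measurable_const.add measurable_snd).pow_const 2)
  exact (vec_indep_pair hvec hkl).comp (hφ (m k)) (hφ (m l))

/-- independence of coordinates as complex random variables -/
lemma vec_indep_coord (hvec : IsComplexGaussianVec μ M x m v) {k l : Fin M} (hkl : k ≠ l) :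
    IndepFun (fun ω => x ω k) (fun ω => x ω l) μ := by
  have hψ : ∀ c : ℂ, Measurable (fun r : ℝ × ℝ => ((c.re + r.1 : ℝ) + (c.im + r.2 : ℝ) * Complex.I : ℂ)) := by
    intro c
    exact ((Complex.measurable_ofReal.comp (measurable_const.add measurable_fst)).add
      ((Complex.measurable_ofReal.comp (measurable_const.add measurable_snd)).mul_const _))
  have h := (vec_indep_pair hvec hkl).comp (hψ (m k)) (hψ (m l))
  have e : ∀ j : Fin M, ((fun r : ℝ × ℝ => (((m j).re + r.1 : ℝ) + ((m j).im + r.2 : ℝ) * Complex.I : ℂ))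
      ∘ (fun ω => ((x ω j - m j).re, (x ω j - m j).im))) = fun ω => x ω j := by
    intro j
    funext ω
    exact (coord_eq j ω).symm
  rw [e k, e l] at h
  exact h

lemma vec_S_integrable (hvec : IsComplexGaussianVec μ M x m v) (k : Fin M) :
    Integrable (fun ω => Complex.normSq (x ω k)) μ := by
  have h := S_integrable (p := (m k).re) (q := (m k).im)
    (vec_measA hvec k) (hvec.2.2.1 k) (vec_measB hvec k) (hvec.2.2.2 k)
  have e : (fun ω => Complex.normSq (x ω k))
      = fun ω => ((m k).re + (x ω k - m k).re) ^ 2 + ((m k).im + (x ω k - m k).im) ^ 2 :=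
    funext fun ω => coord_normSq k ω
  rw [e]
  exact h

lemma vec_ES (hvec : IsComplexGaussianVec μ M x m v) (k : Fin M) :
    ∫ ω, Complex.normSq (x ω k) ∂μ
      = Complex.normSq (m k) + 2 * ((Real.toNNReal (v / 2) : ℝ≥0) : ℝ) := by
  have e : (fun ω => Complex.normSq (x ω k))
      = fun ω => ((m k).re + (x ω k - m k).re) ^ 2 + ((m k).im + (x ω k - m k).im) ^ 2 :=
    funext fun ω => coord_normSq k ω
  rw [e, ES (vec_measA hvec k) (hvec.2.2.1 k) (vec_measB hvec k) (hvec.2.2.2 k),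
    Complex.normSq_apply]
  ring

lemma vec_S_sq_integrable (hvec : IsComplexGaussianVec μ M x m v) (k : Fin M) :
    Integrable (fun ω => Complex.normSq (x ω k) ^ 2) μ := by
  have h := S_sq_integrable (p := (m k).re) (q := (m k).im) (vec_indep_ab hvec k)
    (vec_measA hvec k) (hvec.2.2.1 k) (vec_measB hvec k) (hvec.2.2.2 k)
  have e : (fun ω => Complex.normSq (x ω k) ^ 2)
      = fun ω => (((m k).re + (x ω k - m k).re) ^ 2 + ((m k).im + (x ω k - m k).im) ^ 2) ^ 2 :=
    funext fun ω => by rw [coord_normSq k ω]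
  rw [e]
  exact h

lemma vec_ES2 (hvec : IsComplexGaussianVec μ M x m v) (k : Fin M) :
    ∫ ω, Complex.normSq (x ω k) ^ 2 ∂μ
      = Complex.normSq (m k) ^ 2 + 8 * Complex.normSq (m k) * ((Real.toNNReal (v / 2) : ℝ≥0) : ℝ)
        + 8 * ((Real.toNNReal (v / 2) : ℝ≥0) : ℝ) ^ 2 := by
  have e : (fun ω => Complex.normSq (x ω k) ^ 2)
      = fun ω => (((m k).re + (x ω k - m k).re) ^ 2 + ((m k).im + (x ω k - m k).im) ^ 2) ^ 2 :=
    funext fun ω => by rw [coord_normSq k ω]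
  rw [e, ES2 (vec_indep_ab hvec k) (vec_measA hvec k) (hvec.2.2.1 k)
    (vec_measB hvec k) (hvec.2.2.2 k), Complex.normSq_apply]
  ring

lemma vec_SS_integrable (hvec : IsComplexGaussianVec μ M x m v) (k l : Fin M) :
    Integrable (fun ω => Complex.normSq (x ω k) * Complex.normSq (x ω l)) μ := by
  by_cases hkl : k = l
  · subst hkl
    have h := vec_S_sq_integrable hvec k
    have e : (fun ω => Complex.normSq (x ω k) * Complex.normSq (x ω k))
        = fun ω => Complex.normSq (x ω k) ^ 2 := funext fun ω => (sq _).symm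
    rw [e]; exact h
  · have hind : IndepFun (fun ω => Complex.normSq (x ω k)) (fun ω => Complex.normSq (x ω l)) μ := by
      have h := vec_indep_S hvec hkl
      have e : ∀ j : Fin M, (fun ω => ((m j).re + (x ω j - m j).re) ^ 2
          + ((m j).im + (x ω j - m j).im) ^ 2) = fun ω => Complex.normSq (x ω j) :=
        fun j => funext fun ω => (coord_normSq j ω).symm
      rw [e k, e l] at h
      exact h
    have h := hind.integrable_mul (vec_S_integrable hvec k) (vec_S_integrable hvec l)
    simpa [Pi.mul_def] using h

lemma vec_SS_integral (hvec : IsComplexGaussianVec μ M x m v) (k l : Fin M) :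
    ∫ ω, Complex.normSq (x ω k) * Complex.normSq (x ω l) ∂μ
      = (Complex.normSq (m k) + 2 * ((Real.toNNReal (v / 2) : ℝ≥0) : ℝ))
          * (Complex.normSq (m l) + 2 * ((Real.toNNReal (v / 2) : ℝ≥0) : ℝ))
        + (if k = l then 4 * Complex.normSq (m k) * ((Real.toNNReal (v / 2) : ℝ≥0) : ℝ)
            + 4 * ((Real.toNNReal (v / 2) : ℝ≥0) : ℝ) ^ 2 else 0) := by
  by_cases hkl : k = l
  · subst hkl
    have e : (fun ω => Complex.normSq (x ω k) * Complex.normSq (x ω k))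
        = fun ω => Complex.normSq (x ω k) ^ 2 := funext fun ω => (sq _).symm
    rw [e, vec_ES2 hvec k, if_pos rfl]
    ring
  · have hind : IndepFun (fun ω => Complex.normSq (x ω k)) (fun ω => Complex.normSq (x ω l)) μ := by
      have h := vec_indep_S hvec hkl
      have e : ∀ j : Fin M, (fun ω => ((m j).re + (x ω j - m j).re) ^ 2
          + ((m j).im + (x ω j - m j).im) ^ 2) = fun ω => Complex.normSq (x ω j) :=
        fun j => funext fun ω => (coord_normSq j ω).symm
      rw [e k, e l] at h
      exact h
    rw [hind.integral_fun_mul_eq_mul_integral (Complex.continuous_normSq.measurable.comp (hvec.1 k)).aestronglyMeasurable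
        (Complex.continuous_normSq.measurable.comp (hvec.1 l)).aestronglyMeasurable,
      vec_ES hvec k, vec_ES hvec l, if_neg hkl, add_zero]

/-- Term A: expectation of ‖x‖⁴ -/
lemma vec_termA_integrable (hvec : IsComplexGaussianVec μ M x m v) :
    Integrable (fun ω => (norm2 (x ω)) ^ 2) μ := by
  have e : (fun ω => (norm2 (x ω)) ^ 2)
      = fun ω => ∑ k, ∑ l, Complex.normSq (x ω k) * Complex.normSq (x ω l) := by
    funext ω
    rw [norm2, sq, Finset.sum_mul_sum]
  rw [e]
  exact integrable_finset_sum _ fun k _ => integrable_finset_sum _ fun l _ =>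
    vec_SS_integrable hvec k l

lemma vec_termA_integral (hvec : IsComplexGaussianVec μ M x m v) (hv : 0 ≤ v) :
    ∫ ω, (norm2 (x ω)) ^ 2 ∂μ
      = (norm2 m + M * v) ^ 2 + 2 * v * norm2 m + M * v ^ 2 := by
  set t : ℝ := ((Real.toNNReal (v / 2) : ℝ≥0) : ℝ) with ht
  have htv : t = v / 2 := Real.coe_toNNReal _ (by linarith)
  have e : (fun ω => (norm2 (x ω)) ^ 2)
      = fun ω => ∑ k, ∑ l, Complex.normSq (x ω k) * Complex.normSq (x ω l) := by
    funext ω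
    rw [norm2, sq, Finset.sum_mul_sum]
  rw [e, integral_finset_sum _ fun k _ => integrable_finset_sum _ fun l _ =>
    vec_SS_integrable hvec k l]
  have : ∀ k ∈ Finset.univ, (∫ ω, ∑ l, Complex.normSq (x ω k) * Complex.normSq (x ω l) ∂μ)
      = ∑ l, ∫ ω, Complex.normSq (x ω k) * Complex.normSq (x ω l) ∂μ :=
    fun k _ => integral_finset_sum _ fun l _ => vec_SS_integrable hvec k l
  rw [Finset.sum_congr rfl this]
  have hval : ∀ k l : Fin M, (∫ ω, Complex.normSq (x ω k) * Complex.normSq (x ω l) ∂μ)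
      = (Complex.normSq (m k) + 2 * t) * (Complex.normSq (m l) + 2 * t)
        + (if k = l then 4 * Complex.normSq (m k) * t + 4 * t ^ 2 else 0) :=
    fun k l => vec_SS_integral hvec k l
  rw [Finset.sum_congr rfl fun k _ => Finset.sum_congr rfl fun l _ => hval k l]
  have hsplit : ∑ k : Fin M, ∑ l : Fin M,
      ((Complex.normSq (m k) + 2 * t) * (Complex.normSq (m l) + 2 * t)
        + (if k = l then 4 * Complex.normSq (m k) * t + 4 * t ^ 2 else 0))
      = (∑ k : Fin M, (Complex.normSq (m k) + 2 * t)) * (∑ l : Fin M, (Complex.normSq (m l) + 2 * t))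
        + ∑ k : Fin M, (4 * Complex.normSq (m k) * t + 4 * t ^ 2) := by
    rw [Finset.sum_mul_sum, ← Finset.sum_add_distrib]
    refine Finset.sum_congr rfl fun k _ => ?_
    rw [Finset.sum_add_distrib]
    congr 1
    simp
  rw [hsplit]
  have hsum1 : ∑ k : Fin M, (Complex.normSq (m k) + 2 * t) = norm2 m + M * (2 * t) := by
    rw [Finset.sum_add_distrib, Finset.sum_const, Finset.card_univ, Fintype.card_fin, norm2]
    simp [nsmul_eq_mul]
  have hsum2 : ∑ k : Fin M, (4 * Complex.normSq (m k) * t + 4 * t ^ 2)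
      = 4 * t * norm2 m + M * (4 * t ^ 2) := by
    rw [Finset.sum_add_distrib, Finset.sum_const, Finset.card_univ, Fintype.card_fin,
      Finset.sum_congr rfl (fun k _ => show 4 * Complex.normSq (m k) * t
        = 4 * t * Complex.normSq (m k) from by ring), ← Finset.mul_sum, ← norm2]
    simp [nsmul_eq_mul]
  rw [hsum1, hsum2, htv]
  ring

lemma integrable_conj' {f : Ω → ℂ} (hf : Integrable f μ) :
    Integrable (fun ω => (starRingEnd ℂ) (f ω)) μ := by
  refine ⟨Complex.continuous_conj.comp_aestronglyMeasurable hf.1, ?_⟩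
  have h2 := hf.2
  rw [HasFiniteIntegral] at h2 ⊢
  have e : ∀ ω, ‖(starRingEnd ℂ) (f ω)‖ₑ = ‖f ω‖ₑ := by
    intro ω
    rw [enorm_eq_nnnorm, enorm_eq_nnnorm, starRingEnd_apply, nnnorm_star]
  simp only [e]
  exact h2

lemma vec_coord_integrable (hvec : IsComplexGaussianVec μ M x m v) (k : Fin M) :
    Integrable (fun ω => x ω k) μ := by
  have h := cx_integrable (p := (m k).re) (q := (m k).im)
    (vec_measA hvec k) (hvec.2.2.1 k) (vec_measB hvec k) (hvec.2.2.2 k)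
  have e : (fun ω => x ω k) = fun ω =>
      (((m k).re + (x ω k - m k).re : ℝ) + ((m k).im + (x ω k - m k).im : ℝ) * Complex.I : ℂ) :=
    funext fun ω => coord_eq k ω
  rw [e]
  exact h

lemma vec_coord_integral (hvec : IsComplexGaussianVec μ M x m v) (k : Fin M) :
    ∫ ω, x ω k ∂μ = m k := by
  have e : (fun ω => x ω k) = fun ω =>
      (((m k).re + (x ω k - m k).re : ℝ) + ((m k).im + (x ω k - m k).im : ℝ) * Complex.I : ℂ) :=
    funext fun ω => coord_eq k ω
  rw [e, cx_integral (vec_measA hvec k) (hvec.2.2.1 k) (vec_measB hvec k) (hvec.2.2.2 k),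
    Complex.re_add_im]

lemma vec_mul_conj_integrable (hvec : IsComplexGaussianVec μ M x m v) (k l : Fin M) :
    Integrable (fun ω => x ω k * (starRingEnd ℂ) (x ω l)) μ := by
  by_cases hkl : k = l
  · subst hkl
    have e : (fun ω => x ω k * (starRingEnd ℂ) (x ω k))
        = fun ω => ((Complex.normSq (x ω k) : ℝ) : ℂ) :=
      funext fun ω => by rw [Complex.mul_conj]
    rw [e]
    exact (vec_S_integrable hvec k).ofReal
  · have hind : IndepFun (fun ω => x ω k) (fun ω => (starRingEnd ℂ) (x ω l)) μ := by
      have h := (vec_indep_coord hvec hkl).comp measurable_id continuous_star.measurable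
      exact h
    have h := hind.integrable_mul (vec_coord_integrable hvec k)
      (integrable_conj' (vec_coord_integrable hvec l))
    simpa [Pi.mul_def] using h

lemma vec_mul_conj_integral (hvec : IsComplexGaussianVec μ M x m v) (hv : 0 ≤ v) (k l : Fin M) :
    ∫ ω, x ω k * (starRingEnd ℂ) (x ω l) ∂μ
      = m k * (starRingEnd ℂ) (m l) + (if k = l then (v : ℂ) else 0) := by
  by_cases hkl : k = l
  · subst hkl
    have e : (fun ω => x ω k * (starRingEnd ℂ) (x ω k))
        = fun ω => ((Complex.normSq (x ω k) : ℝ) : ℂ) :=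
      funext fun ω => by rw [Complex.mul_conj]
    rw [e, if_pos rfl]
    have h1 : ∫ ω, ((Complex.normSq (x ω k) : ℝ) : ℂ) ∂μ
        = ((∫ ω, Complex.normSq (x ω k) ∂μ : ℝ) : ℂ) := integral_ofReal
    rw [h1, vec_ES hvec k, Complex.mul_conj]
    have htv : ((Real.toNNReal (v / 2) : ℝ≥0) : ℝ) = v / 2 := Real.coe_toNNReal _ (by linarith)
    rw [htv]
    push_cast
    ring
  · have hind : IndepFun (fun ω => x ω k) (fun ω => (starRingEnd ℂ) (x ω l)) μ :=
      (vec_indep_coord hvec hkl).comp measurable_id continuous_star.measurable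
    rw [indep_integral_mul_complex hind (hvec.1 k).aemeasurable
        (continuous_star.measurable.comp (hvec.1 l)).aemeasurable,
      vec_coord_integral hvec k]
    have h2 : ∫ ω, (starRingEnd ℂ) (x ω l) ∂μ = (starRingEnd ℂ) (∫ ω, x ω l ∂μ) := integral_conj
    rw [h2, vec_coord_integral hvec l, if_neg hkl, add_zero]

end vec

section cross

variable {M : ℕ} {x y : Ω → Fin M → ℂ} {mA mB : Fin M → ℂ} {vA vB : ℝ}

lemma conj_coord_mul_integrable (hvecB : IsComplexGaussianVec μ M y mB vB) (k l : Fin M) :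
    Integrable (fun ω => (starRingEnd ℂ) (y ω k) * y ω l) μ := by
  have e : (fun ω => (starRingEnd ℂ) (y ω k) * y ω l)
      = fun ω => (starRingEnd ℂ) (y ω k * (starRingEnd ℂ) (y ω l)) :=
    funext fun ω => by rw [map_mul, Complex.conj_conj]
  rw [e]
  exact integrable_conj' (vec_mul_conj_integrable hvecB k l)

lemma conj_coord_mul_integral (hvecB : IsComplexGaussianVec μ M y mB vB) (hvB : 0 ≤ vB)
    (k l : Fin M) :
    ∫ ω, (starRingEnd ℂ) (y ω k) * y ω l ∂μ
      = (starRingEnd ℂ) (mB k) * mB l + (if k = l then (vB : ℂ) else 0) := by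
  have e : (fun ω => (starRingEnd ℂ) (y ω k) * y ω l)
      = fun ω => (starRingEnd ℂ) (y ω k * (starRingEnd ℂ) (y ω l)) :=
    funext fun ω => by rw [map_mul, Complex.conj_conj]
  rw [e]
  have h1 : ∫ ω, (starRingEnd ℂ) (y ω k * (starRingEnd ℂ) (y ω l)) ∂μ
      = (starRingEnd ℂ) (∫ ω, y ω k * (starRingEnd ℂ) (y ω l) ∂μ) := integral_conj
  rw [h1, vec_mul_conj_integral hvecB hvB k l, map_add, map_mul, Complex.conj_conj]
  congr 1
  by_cases hkl : k = l
  · simp [hkl, Complex.conj_ofReal]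
  · simp [hkl]

lemma cross_meas_F (k l : Fin M) :
    Measurable (fun u : Fin M → ℂ => u k * (starRingEnd ℂ) (u l)) :=
  (measurable_pi_apply k).mul (continuous_star.measurable.comp (measurable_pi_apply l))

lemma cross_meas_G (k l : Fin M) :
    Measurable (fun u : Fin M → ℂ => (starRingEnd ℂ) (u k) * u l) :=
  ((continuous_star.measurable.comp (measurable_pi_apply k) :
    Measurable fun u : Fin M → ℂ => (starRingEnd ℂ) (u k))).mul (measurable_pi_apply l)

lemma cross_indep (hxy : IndepFun x y μ) (k l : Fin M) :
    IndepFun (fun ω => x ω k * (starRingEnd ℂ) (x ω l))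
      (fun ω => (starRingEnd ℂ) (y ω k) * y ω l) μ :=
  hxy.comp (cross_meas_F k l) (cross_meas_G k l)

lemma cross_term_integrable (hvecA : IsComplexGaussianVec μ M x mA vA)
    (hvecB : IsComplexGaussianVec μ M y mB vB) (hxy : IndepFun x y μ) (k l : Fin M) :
    Integrable (fun ω => (x ω k * (starRingEnd ℂ) (x ω l))
      * ((starRingEnd ℂ) (y ω k) * y ω l)) μ := by
  have h := (cross_indep hxy k l).integrable_mul
    (vec_mul_conj_integrable hvecA k l) (conj_coord_mul_integrable hvecB k l)
  simpa [Pi.mul_def] using h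

lemma cross_term_integral (hvecA : IsComplexGaussianVec μ M x mA vA)
    (hvecB : IsComplexGaussianVec μ M y mB vB) (hvA : 0 ≤ vA) (hvB : 0 ≤ vB)
    (hxy : IndepFun x y μ) (k l : Fin M) :
    ∫ ω, (x ω k * (starRingEnd ℂ) (x ω l)) * ((starRingEnd ℂ) (y ω k) * y ω l) ∂μ
      = (mA k * (starRingEnd ℂ) (mA l) + (if k = l then (vA : ℂ) else 0))
        * ((starRingEnd ℂ) (mB k) * mB l + (if k = l then (vB : ℂ) else 0)) := by
  rw [indep_integral_mul_complex (cross_indep hxy k l)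
      ((cross_meas_F k l).comp (measurable_pi_lambda _ fun k => hvecA.1 k)).aemeasurable
      ((cross_meas_G k l).comp (measurable_pi_lambda _ fun k => hvecB.1 k)).aemeasurable,
    vec_mul_conj_integral hvecA hvA k l, conj_coord_mul_integral hvecB hvB k l]

lemma dotH_mul_conj (u w : Fin M → ℂ) :
    dotH u w * (starRingEnd ℂ) (dotH u w)
      = ∑ k, ∑ l, (w k * (starRingEnd ℂ) (w l)) * ((starRingEnd ℂ) (u k) * u l) := by
  rw [dotH, map_sum, Finset.sum_mul_sum]
  refine Finset.sum_congr rfl fun k _ => Finset.sum_congr rfl fun l _ => ?_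
  rw [map_mul, Complex.conj_conj]
  ring

lemma normSq_dotH_eq (u w : Fin M → ℂ) :
    (Complex.normSq (dotH u w) : ℝ)
      = (∑ k, ∑ l, (w k * (starRingEnd ℂ) (w l)) * ((starRingEnd ℂ) (u k) * u l)).re := by
  rw [← dotH_mul_conj, Complex.mul_conj, Complex.ofReal_re]

lemma vec_cross_integrable (hvecA : IsComplexGaussianVec μ M x mA vA)
    (hvecB : IsComplexGaussianVec μ M y mB vB) (hxy : IndepFun x y μ) :
    Integrable (fun ω => Complex.normSq (dotH (y ω) (x ω))) μ := by
  have e : (fun ω => Complex.normSq (dotH (y ω) (x ω)))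
      = fun ω => (∑ k, ∑ l, (x ω k * (starRingEnd ℂ) (x ω l))
          * ((starRingEnd ℂ) (y ω k) * y ω l)).re :=
    funext fun ω => normSq_dotH_eq (y ω) (x ω)
  rw [e]
  have hT : Integrable (fun ω => ∑ k, ∑ l, (x ω k * (starRingEnd ℂ) (x ω l))
      * ((starRingEnd ℂ) (y ω k) * y ω l)) μ :=
    integrable_finset_sum _ fun k _ => integrable_finset_sum _ fun l _ =>
      cross_term_integrable hvecA hvecB hxy k l
  exact hT.re

lemma cross_sum_eval :
    (∑ k : Fin M, ∑ l : Fin M,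
      ((mA k * (starRingEnd ℂ) (mA l) + (if k = l then (vA : ℂ) else 0))
        * ((starRingEnd ℂ) (mB k) * mB l + (if k = l then (vB : ℂ) else 0))))
      = ((Complex.normSq (dotH mB mA) + vB * norm2 mA + vA * norm2 mB
          + M * (vA * vB) : ℝ) : ℂ) := by
  have hterm : ∀ k l : Fin M,
      ((mA k * (starRingEnd ℂ) (mA l) + (if k = l then (vA : ℂ) else 0))
        * ((starRingEnd ℂ) (mB k) * mB l + (if k = l then (vB : ℂ) else 0)))
      = (mA k * (starRingEnd ℂ) (mB k)) * ((starRingEnd ℂ) (mA l) * mB l)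
        + ((if k = l then (vB : ℂ) * (mA k * (starRingEnd ℂ) (mA l)) else 0)
          + ((if k = l then (vA : ℂ) * ((starRingEnd ℂ) (mB k) * mB l) else 0)
            + (if k = l then (vA : ℂ) * (vB : ℂ) else 0))) := by
    intro k l
    by_cases hkl : k = l
    · simp only [hkl, if_pos]
      ring
    · simp only [hkl, if_neg, if_false]
      ring
  rw [Finset.sum_congr rfl fun k _ => Finset.sum_congr rfl fun l _ => hterm k l]
  have hsplit : ∀ k : Fin M, (∑ l : Fin M,
      ((mA k * (starRingEnd ℂ) (mB k)) * ((starRingEnd ℂ) (mA l) * mB l)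
        + ((if k = l then (vB : ℂ) * (mA k * (starRingEnd ℂ) (mA l)) else 0)
          + ((if k = l then (vA : ℂ) * ((starRingEnd ℂ) (mB k) * mB l) else 0)
            + (if k = l then (vA : ℂ) * (vB : ℂ) else 0)))))
      = (mA k * (starRingEnd ℂ) (mB k)) * (∑ l, (starRingEnd ℂ) (mA l) * mB l)
        + ((vB : ℂ) * (mA k * (starRingEnd ℂ) (mA k))
          + ((vA : ℂ) * ((starRingEnd ℂ) (mB k) * mB k) + (vA : ℂ) * (vB : ℂ))) := by
    intro k
    rw [Finset.sum_add_distrib, ← Finset.mul_sum]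
    congr 1
    rw [Finset.sum_add_distrib]
    congr 1
    · simp
    rw [Finset.sum_add_distrib]
    congr 1 <;> simp
  rw [Finset.sum_congr rfl fun k _ => hsplit k]
  rw [Finset.sum_add_distrib, ← Finset.sum_mul, Finset.sum_add_distrib, Finset.sum_add_distrib,
    ← Finset.mul_sum, ← Finset.mul_sum, Finset.sum_const, Finset.card_univ, Fintype.card_fin]
  have h1 : (∑ k : Fin M, mA k * (starRingEnd ℂ) (mB k)) = dotH mB mA := by
    rw [dotH]
    exact Finset.sum_congr rfl fun k _ => by ring
  have h2 : (∑ l : Fin M, (starRingEnd ℂ) (mA l) * mB l) = (starRingEnd ℂ) (dotH mB mA) := by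
    rw [dotH, map_sum]
    exact (Finset.sum_congr rfl fun l _ => by rw [map_mul, Complex.conj_conj]; ring).symm
  have h3 : (∑ k : Fin M, mA k * (starRingEnd ℂ) (mA k)) = ((norm2 mA : ℝ) : ℂ) := by
    rw [norm2]
    push_cast
    exact Finset.sum_congr rfl fun k _ => by rw [Complex.mul_conj]
  have h4 : (∑ k : Fin M, (starRingEnd ℂ) (mB k) * mB k) = ((norm2 mB : ℝ) : ℂ) := by
    rw [norm2]
    push_cast
    exact Finset.sum_congr rfl fun k _ => by rw [mul_comm, Complex.mul_conj]
  rw [h1, h2, h3, h4, Complex.mul_conj]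
  push_cast
  ring

lemma vec_cross_integral (hvecA : IsComplexGaussianVec μ M x mA vA)
    (hvecB : IsComplexGaussianVec μ M y mB vB) (hvA : 0 ≤ vA) (hvB : 0 ≤ vB)
    (hxy : IndepFun x y μ) :
    ∫ ω, Complex.normSq (dotH (y ω) (x ω)) ∂μ
      = Complex.normSq (dotH mB mA) + vB * norm2 mA + vA * norm2 mB + M * (vA * vB) := by
  have e : (fun ω => Complex.normSq (dotH (y ω) (x ω)))
      = fun ω => (∑ k, ∑ l, (x ω k * (starRingEnd ℂ) (x ω l))
          * ((starRingEnd ℂ) (y ω k) * y ω l)).re :=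
    funext fun ω => normSq_dotH_eq (y ω) (x ω)
  have hT : Integrable (fun ω => ∑ k, ∑ l, (x ω k * (starRingEnd ℂ) (x ω l))
      * ((starRingEnd ℂ) (y ω k) * y ω l)) μ :=
    integrable_finset_sum _ fun k _ => integrable_finset_sum _ fun l _ =>
      cross_term_integrable hvecA hvecB hxy k l
  rw [e]
  have hre : ∫ ω, (∑ k, ∑ l, (x ω k * (starRingEnd ℂ) (x ω l))
      * ((starRingEnd ℂ) (y ω k) * y ω l)).re ∂μ
      = (∫ ω, ∑ k, ∑ l, (x ω k * (starRingEnd ℂ) (x ω l))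
          * ((starRingEnd ℂ) (y ω k) * y ω l) ∂μ).re := integral_re hT
  rw [hre, integral_finset_sum _ fun k _ => integrable_finset_sum _ fun l _ =>
    cross_term_integrable hvecA hvecB hxy k l]
  have : ∀ k ∈ Finset.univ, (∫ ω, ∑ l, (x ω k * (starRingEnd ℂ) (x ω l))
      * ((starRingEnd ℂ) (y ω k) * y ω l) ∂μ)
      = ∑ l, ∫ ω, (x ω k * (starRingEnd ℂ) (x ω l)) * ((starRingEnd ℂ) (y ω k) * y ω l) ∂μ :=
    fun k _ => integral_finset_sum _ fun l _ => cross_term_integrable hvecA hvecB hxy k l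
  rw [Finset.sum_congr rfl this,
    Finset.sum_congr rfl fun k _ => Finset.sum_congr rfl fun l _ =>
      cross_term_integral hvecA hvecB hvA hvB hxy k l,
    cross_sum_eval, Complex.ofReal_re]

end cross


lemma dotH_self {M : ℕ} (u : Fin M → ℂ) : dotH u u = ((norm2 u : ℝ) : ℂ) := by
  rw [dotH, norm2]
  push_cast
  exact Finset.sum_congr rfl fun k _ => by rw [mul_comm, Complex.mul_conj]

lemma abs_dotH_self_sq {M : ℕ} (u : Fin M → ℂ) :
    ‖dotH u u‖ ^ 2 = (norm2 u) ^ 2 := by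
  rw [Complex.sq_norm, dotH_self, Complex.normSq_ofReal, sq]

end GaussAux

open Filter Topology

/-- asymptotically exact form of the approximation (40) for the
desired-signal term: if `|⟨m_B^(M), m_A^(M)⟩|/M → 0` then
`(1/M²)·E{ p_A(|ĥ_A^H ĥ_A|² + |ĥ_B^H ĥ_A|²) } → p_A·ω_A²` as `M → ∞`. -/
theorem tendsto_desired_signal_term
    {Ω : Type*} [MeasurableSpace Ω] (μ : Measure Ω) [IsProbabilityMeasure μ]
    (βA βB KA KB : ℝ) (hβA : 0 < βA) (hβB : 0 < βB) (hKA : 0 ≤ KA) (hKB : 0 ≤ KB)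
    (ηA ηB : ℝ) (hηA0 : 0 ≤ ηA) (hηA1 : ηA < 1) (hηB0 : 0 ≤ ηB) (hηB1 : ηB < 1)
    (vA vB : ℝ) (hvA : vA = βA * ηA / (KA + 1)) (hvB : vB = βB * ηB / (KB + 1))
    (hA hB : (M : ℕ) → Ω → Fin M → ℂ) (mA mB : (M : ℕ) → Fin M → ℂ)
    (hmA : ∀ M : ℕ, 1 ≤ M → norm2 (mA M) = M * βA * KA / (KA + 1))
    (hmB : ∀ M : ℕ, 1 ≤ M → norm2 (mB M) = M * βB * KB / (KB + 1))
    (hgA : ∀ M : ℕ, 1 ≤ M → IsComplexGaussianVec μ M (hA M) (mA M) vA)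
    (hgB : ∀ M : ℕ, 1 ≤ M → IsComplexGaussianVec μ M (hB M) (mB M) vB)
    (hindep : ∀ M : ℕ, 1 ≤ M → IndepFun (hA M) (hB M) μ)
    (hcross : Tendsto (fun M : ℕ => ‖dotH (mB M) (mA M)‖ / M) atTop (𝓝 0))
    (pA : ℝ) (hpA : 0 ≤ pA)
    (omgA : ℝ) (homgA : omgA = βA * (KA + ηA) / (KA + 1)) :
    Tendsto (fun M : ℕ => (1 / (M : ℝ) ^ 2) *
        ∫ ω, pA * (‖dotH (hA M ω) (hA M ω)‖ ^ 2
          + ‖dotH (hB M ω) (hA M ω)‖ ^ 2) ∂μ)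
      atTop (𝓝 (pA * omgA ^ 2)) := by
  classical
  have hKA1 : (0:ℝ) < KA + 1 := by linarith
  have hKB1 : (0:ℝ) < KB + 1 := by linarith
  have hvA0 : 0 ≤ vA := by rw [hvA]; positivity
  have hvB0 : 0 ≤ vB := by rw [hvB]; positivity
  set qA : ℝ := βA * KA / (KA + 1) with hqA
  set qB : ℝ := βB * KB / (KB + 1) with hqB
  set C1 : ℝ := 2 * vA * qA + vA ^ 2 + vB * qA + vA * qB + vA * vB with hC1
  have homg : qA + vA = omgA := by
    rw [homgA, hvA, hqA]
    field_simp
  have key : ∀ M : ℕ, 1 ≤ M →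
      (∫ ω, pA * (‖dotH (hA M ω) (hA M ω)‖ ^ 2
          + ‖dotH (hB M ω) (hA M ω)‖ ^ 2) ∂μ)
      = pA * (((norm2 (mA M) + M * vA) ^ 2 + 2 * vA * norm2 (mA M) + M * vA ^ 2)
          + (Complex.normSq (dotH (mB M) (mA M)) + vB * norm2 (mA M) + vA * norm2 (mB M)
            + M * (vA * vB))) := by
    intro M hM
    have e : (fun ω => pA * (‖dotH (hA M ω) (hA M ω)‖ ^ 2
          + ‖dotH (hB M ω) (hA M ω)‖ ^ 2))
        = fun ω => pA * ((norm2 (hA M ω)) ^ 2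
          + Complex.normSq (dotH (hB M ω) (hA M ω))) :=
      funext fun ω => by rw [GaussAux.abs_dotH_self_sq, Complex.sq_norm]
    rw [e, integral_const_mul,
      integral_add (GaussAux.vec_termA_integrable (hgA M hM))
        (GaussAux.vec_cross_integrable (hgA M hM) (hgB M hM) (hindep M hM)),
      GaussAux.vec_termA_integral (hgA M hM) hvA0,
      GaussAux.vec_cross_integral (hgA M hM) (hgB M hM) hvA0 hvB0 (hindep M hM)]
  have hg : Tendsto (fun M : ℕ => pA * ((qA + vA) ^ 2
      + (C1 * (1 / (M : ℝ)) + (‖dotH (mB M) (mA M)‖ / M) ^ 2)))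
      atTop (𝓝 (pA * omgA ^ 2)) := by
    have l1 : Tendsto (fun M : ℕ => (1:ℝ) / M) atTop (𝓝 0) :=
      tendsto_one_div_atTop_nhds_zero_nat
    have l2 : Tendsto (fun M : ℕ => (‖dotH (mB M) (mA M)‖ / M) ^ 2)
        atTop (𝓝 (0 ^ 2)) := hcross.pow 2
    have h := ((tendsto_const_nhds (x := (qA + vA) ^ 2)).add
      ((l1.const_mul C1).add l2)).const_mul pA
    have hval : pA * ((qA + vA) ^ 2 + (C1 * 0 + 0 ^ 2)) = pA * omgA ^ 2 := by
      rw [homg]; ring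
    rw [hval] at h
    exact h
  refine hg.congr' ?_
  filter_upwards [eventually_ge_atTop 1] with M hM
  have hM0 : ((M : ℝ)) ≠ 0 := by
    have : (1:ℝ) ≤ (M:ℝ) := by exact_mod_cast hM
    linarith
  rw [key M hM, hmA M hM, hmB M hM]
  have habs : Complex.normSq (dotH (mB M) (mA M))
      = (‖dotH (mB M) (mA M)‖) ^ 2 := (Complex.sq_norm _).symm
  simp only [habs, hC1, hqA, hqB]
  field_simp
  ring
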